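/- Let E be a real inner product space, X ⊆ E a nonempty convex set, d : E → ℝ a convex Fréchet-differentiable function with Bregman divergence V(y,x) := d(y) − d(x) − ⟨∇d(x), y − x⟩, μ > 0, δ ≥ 0, and g : E → E a μ-relatively strongly monotone operator on X with z* ∈ X a solution of the Minty variational inequality. Let (z_k)_{k≥0}, (w_k)_{k≥0} in X and positive reals (L_k)_{k≥1} satisfy, for every k ≥ 0: (i) w_k minimizes y ↦ ⟨(1/L_{k+1})·g(z_k), y⟩ + V(y, z_k) over X; (ii) z_{k+1} minimizes u ↦ ⟨(1/L_{k+1})·g(w_k), u⟩ + V(u, z_k) + (μ/L_{k+1})·V(u, w_k) over X; (iii) ⟨g(z_k) − g(w_k), z_{k+1} − w_k⟩ ≤ L_{k+1}·( V(w_k, z_k) + V(z_{k+1}, w_k) ) + L_{k+1}·δ. Then for every k ≥ 0: V(z*, z_{k+1}) ≤ (∏_{i=1}^{k+1} (1 + μ/L_i)^{−1})·V(z*, z_0) + L_{k+1}·δ/(L_{k+1} + μ) + Σ_{j=1}^{k} ( L_j·δ/(L_j + μ) )·∏_{i=j+1}^{k+1} (1 + μ/L_i)^{−1}. -/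

import Mathlib

open scoped RealInnerProductSpace
open Finset Topology Filter Set

private lemma slope_ge_lim {f : ℝ → ℝ} {m c : ℝ} (hf : HasDerivAt f m 0)
    (h : ∀ t : ℝ, t ∈ Set.Ioc (0:ℝ) 1 → c * t ≤ f t - f 0) : c ≤ m := by
  have h1 : Filter.Tendsto (slope f 0) (𝓝[>] (0:ℝ)) (𝓝 m) :=
    (hasDerivAt_iff_tendsto_slope.mp hf).mono_left
      (nhdsWithin_mono _ (fun x hx => ne_of_gt hx))
  refine ge_of_tendsto h1 ?_
  filter_upwards [Ioc_mem_nhdsGT_of_mem (Set.mem_Ico.mpr ⟨le_refl 0, one_pos⟩)] with t ht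
  have ht0 : (0:ℝ) < t := ht.1
  have h2 : 0 ≤ (f t - f 0) - c * t := by have := h t ht; linarith
  have h3 := mul_nonneg (le_of_lt (inv_pos.mpr ht0)) h2
  rw [slope_def_field, div_eq_inv_mul, sub_zero]
  have : t⁻¹ * ((f t - f 0) - c * t) = t⁻¹ * (f t - f 0) - c := by field_simp
  linarith [h3.trans_eq this]

private lemma slope_le_lim {f : ℝ → ℝ} {m c : ℝ} (hf : HasDerivAt f m 0)
    (h : ∀ t : ℝ, t ∈ Set.Ioc (0:ℝ) 1 → f t - f 0 ≤ c * t) : m ≤ c := by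
  have := slope_ge_lim (c := -c) hf.neg (fun t ht => by
    have := h t ht; simp only [neg_mul, Pi.neg_apply]; linarith)
  linarith

private lemma line_hasDerivAt {E : Type*} [NormedAddCommGroup E] [InnerProductSpace ℝ E]
    [CompleteSpace E]
    (d : E → ℝ) (Dd : E → E) (hd : ∀ x, HasGradientAt d (Dd x) x) (x v : E) :
    HasDerivAt (fun t : ℝ => d (x + t • v)) ⟪Dd x, v⟫ 0 := by
  have hline : HasDerivAt (fun t : ℝ => x + t • v) v 0 := by
    simpa using ((hasDerivAt_id (0:ℝ)).smul_const v).const_add x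
  have hfd := (hasGradientAt_iff_hasFDerivAt.mp (hd x))
  have hx : x + (0:ℝ) • v = x := by simp
  rw [← hx] at hfd
  have := hfd.comp_hasDerivAt (0:ℝ) hline
  simpa [Function.comp_def] using this

private lemma grad_lower {E : Type*} [NormedAddCommGroup E] [InnerProductSpace ℝ E]
    [CompleteSpace E]
    (d : E → ℝ) (hdconv : ConvexOn ℝ Set.univ d)
    (Dd : E → E) (hd : ∀ x, HasGradientAt d (Dd x) x) (x y : E) :
    d x + ⟪Dd x, y - x⟫ ≤ d y := by
  have hder := line_hasDerivAt d Dd hd x (y - x)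
  have key : ⟪Dd x, y - x⟫ ≤ d y - d x := by
    refine slope_le_lim hder (fun t ht => ?_)
    obtain ⟨ht0, ht1⟩ := ht
    have hmem : x + t • (y - x) = (1 - t) • x + t • y := by
      module
    have hc := hdconv.2 (Set.mem_univ x) (Set.mem_univ y)
      (by linarith : (0:ℝ) ≤ 1 - t) (le_of_lt ht0) (by ring)
    rw [← hmem] at hc
    simp only [smul_eq_mul, zero_smul, add_zero] at hc ⊢
    nlinarith
  linarith

private lemma foc {E : Type*} [NormedAddCommGroup E] [InnerProductSpace ℝ E]
    [CompleteSpace E]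
    {X : Set E} (hXconv : Convex ℝ X)
    (d : E → ℝ) (Dd : E → E) (hd : ∀ x, HasGradientAt d (Dd x) x)
    {w u : E} (hw : w ∈ X) (hu : u ∈ X) (a : E) (s : ℝ)
    (hmin : ∀ v ∈ X, ⟪a, w⟫ + s * d w ≤ ⟪a, v⟫ + s * d v) :
    0 ≤ ⟪a, u - w⟫ + s * ⟪Dd w, u - w⟫ := by
  set f : ℝ → ℝ := fun t => ⟪a, w + t • (u - w)⟫ + s * d (w + t • (u - w)) with hf
  have hder : HasDerivAt f (⟪a, u - w⟫ + s * ⟪Dd w, u - w⟫) 0 := by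
    have h1 : HasDerivAt (fun t : ℝ => ⟪a, w + t • (u - w)⟫) ⟪a, u - w⟫ 0 := by
      have : (fun t : ℝ => ⟪a, w + t • (u - w)⟫) = fun t : ℝ => ⟪a, w⟫ + t * ⟪a, u - w⟫ := by
        funext t; rw [inner_add_right, real_inner_smul_right]
      rw [this]
      simpa using ((hasDerivAt_id (0:ℝ)).mul_const ⟪a, u - w⟫).const_add ⟪a, w⟫
    exact h1.add ((line_hasDerivAt d Dd hd w (u - w)).const_mul s)
  refine slope_ge_lim (c := 0) hder (fun t ht => ?_)
  obtain ⟨ht0, ht1⟩ := ht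
  have hmem : w + t • (u - w) ∈ X := by
    have : (1 - t) • w + t • u ∈ X := hXconv hw hu
      (by linarith) (le_of_lt ht0) (by ring)
    have he : w + t • (u - w) = (1 - t) • w + t • u := by module
    rwa [he]
  have := hmin _ hmem
  simp only [hf, zero_mul, zero_smul, add_zero]
  linarith

private lemma minty_strong {E : Type*} [NormedAddCommGroup E] [InnerProductSpace ℝ E]
    [CompleteSpace E]
    {X : Set E} (hXconv : Convex ℝ X)
    (d : E → ℝ) (hdconv : ConvexOn ℝ Set.univ d)
    (Dd : E → E) (hd : ∀ x, HasGradientAt d (Dd x) x)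
    (V : E → E → ℝ) (hV : ∀ y x, V y x = d y - d x - ⟪Dd x, y - x⟫)
    (μ : ℝ) (hμ : 0 < μ) (g : E → E)
    (hmono : ∀ x ∈ X, ∀ y ∈ X, μ * (V y x + V x y) ≤ ⟪g y - g x, y - x⟫)
    (zs : E) (hzs : zs ∈ X) (hMinty : ∀ x ∈ X, ⟪g x, zs - x⟫ ≤ 0)
    {w : E} (hw : w ∈ X) :
    ⟪g w, zs - w⟫ ≤ -(μ * V zs w) := by
  have hVnn : ∀ y x : E, 0 ≤ V y x := by
    intro y x
    have := grad_lower d hdconv Dd hd x y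
    rw [hV]; linarith
  set F : ℝ → E := fun t => w + t • (zs - w) with hF
  have key : ∀ t : ℝ, t ∈ Set.Ioo (0:ℝ) 1 →
      t * ⟪g w, zs - w⟫ ≤ -(μ * V (F t) w) := by
    intro t ht
    obtain ⟨ht0, ht1⟩ := ht
    have hmem : F t ∈ X := by
      have : (1 - t) • w + t • zs ∈ X := hXconv hw hzs (by linarith) (le_of_lt ht0) (by ring)
      have he : F t = (1 - t) • w + t • zs := by simp only [hF]; module
      rwa [he]
    have hminty := hMinty (F t) hmem
    have h1 : zs - F t = (1 - t) • (zs - w) := by simp only [hF]; module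
    rw [h1, real_inner_smul_right] at hminty
    have h2 : ⟪g (F t), zs - w⟫ ≤ 0 := by nlinarith
    have h3 := hmono w hw (F t) hmem
    have h4 : F t - w = t • (zs - w) := by simp only [hF]; module
    rw [h4, real_inner_smul_right, inner_sub_left] at h3
    have h5 := hVnn (F t) w
    have h6 := hVnn w (F t)
    nlinarith
  have hdc : Continuous d := continuous_iff_continuousAt.mpr fun x => (hd x).continuousAt
  have hFc : Continuous F := by
    simp only [hF]; exact continuous_const.add (continuous_id.smul continuous_const)
  have hrhs : Filter.Tendsto (fun t : ℝ => -(μ * V (F t) w)) (𝓝[<] (1:ℝ))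
      (𝓝 (-(μ * V zs w))) := by
    have hc : Continuous (fun t : ℝ => -(μ * V (F t) w)) := by
      simp only [hV]
      exact (continuous_const.mul ((hdc.comp hFc).sub continuous_const |>.sub
        ((continuous_const.inner ((hFc.sub continuous_const)))))).neg
    have hF1 : F 1 = zs := by simp only [hF]; module
    have := hc.tendsto 1
    rw [hF1] at this
    exact this.mono_left nhdsWithin_le_nhds
  have hlhs : Filter.Tendsto (fun t : ℝ => t * ⟪g w, zs - w⟫) (𝓝[<] (1:ℝ))
      (𝓝 ⟪g w, zs - w⟫) := by
    have h0 : Filter.Tendsto (fun t : ℝ => t) (𝓝[<] (1:ℝ)) (𝓝 1) :=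
      Filter.tendsto_id.mono_left nhdsWithin_le_nhds
    simpa using h0.mul_const ⟪g w, zs - w⟫
  refine le_of_tendsto_of_tendsto hlhs hrhs ?_
  filter_upwards [Ioo_mem_nhdsLT_of_mem (Set.mem_Ioc.mpr ⟨zero_lt_one, le_refl 1⟩)] with t ht
  exact key t ht

/-- Remark after Theorem 4: sharper unrolled estimate for Algorithm 5. -/
theorem algorithm5_convergence_sharper
    {E : Type*} [NormedAddCommGroup E] [InnerProductSpace ℝ E] [CompleteSpace E]
    (X : Set E) (hXne : X.Nonempty) (hXconv : Convex ℝ X)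
    (d : E → ℝ) (hdconv : ConvexOn ℝ Set.univ d)
    (Dd : E → E) (hd : ∀ x, HasGradientAt d (Dd x) x)
    (V : E → E → ℝ) (hV : ∀ y x, V y x = d y - d x - ⟪Dd x, y - x⟫)
    (μ : ℝ) (hμ : 0 < μ) (g : E → E)
    (hmono : ∀ x ∈ X, ∀ y ∈ X, μ * (V y x + V x y) ≤ ⟪g y - g x, y - x⟫)
    (zs : E) (hzs : zs ∈ X) (hMinty : ∀ x ∈ X, ⟪g x, zs - x⟫ ≤ 0)
    (z w : ℕ → E) (hzX : ∀ k, z k ∈ X) (hwX : ∀ k, w k ∈ X)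
    (L : ℕ → ℝ) (hL : ∀ i ≥ 1, 0 < L i)
    (hwmin : ∀ k : ℕ, ∀ y ∈ X,
      (1 / L (k + 1)) * ⟪g (z k), w k⟫ + V (w k) (z k) ≤
        (1 / L (k + 1)) * ⟪g (z k), y⟫ + V y (z k))
    (hzmin : ∀ k : ℕ, ∀ u ∈ X,
      (1 / L (k + 1)) * ⟪g (w k), z (k + 1)⟫ + V (z (k + 1)) (z k) +
          (μ / L (k + 1)) * V (z (k + 1)) (w k) ≤
        (1 / L (k + 1)) * ⟪g (w k), u⟫ + V u (z k) + (μ / L (k + 1)) * V u (w k))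
    (δ : ℝ) (hδ : 0 ≤ δ)
    (hls : ∀ k : ℕ, ⟪g (z k) - g (w k), z (k + 1) - w k⟫ ≤
      L (k + 1) * (V (w k) (z k) + V (z (k + 1)) (w k)) + L (k + 1) * δ) :
    ∀ k : ℕ, V zs (z (k + 1)) ≤
      (∏ i ∈ Icc 1 (k + 1), (1 + μ / L i)⁻¹) * V zs (z 0) +
        L (k + 1) * δ / (L (k + 1) + μ) +
        ∑ j ∈ Icc 1 k, L j * δ / (L j + μ) * ∏ i ∈ Icc (j + 1) (k + 1), (1 + μ / L i)⁻¹ := by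
  have hVnn : ∀ y x : E, 0 ≤ V y x := by
    intro y x
    have := grad_lower d hdconv Dd hd x y
    rw [hV]; linarith
  -- one-step recursion
  have hrec : ∀ k : ℕ, V zs (z (k + 1)) ≤ (1 + μ / L (k + 1))⁻¹ * (V zs (z k) + δ) := by
    intro k
    set ℓ := L (k + 1) with hℓdef
    have hℓ : 0 < ℓ := hL (k + 1) (by omega)
    have e1 : ∀ u : E, ⟪g (z k) - ℓ • Dd (z k), u⟫ + ℓ * d u =
        ℓ * ((1 / ℓ) * ⟪g (z k), u⟫ + V u (z k)) + ℓ * d (z k) - ℓ * ⟪Dd (z k), z k⟫ := by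
      intro u
      rw [hV, inner_sub_left, real_inner_smul_left, inner_sub_right]
      field_simp
      ring
    have hmin1 : ∀ v ∈ X, ⟪g (z k) - ℓ • Dd (z k), w k⟫ + ℓ * d (w k) ≤
        ⟪g (z k) - ℓ • Dd (z k), v⟫ + ℓ * d v := by
      intro v hv
      rw [e1, e1]
      have h := mul_le_mul_of_nonneg_left (hwmin k v hv) hℓ.le
      linarith
    have h1 := foc hXconv d Dd hd (hwX k) (hzX (k + 1))
      (g (z k) - ℓ • Dd (z k)) ℓ hmin1
    have e2 : ∀ u : E, ⟪g (w k) - ℓ • Dd (z k) - μ • Dd (w k), u⟫ + (ℓ + μ) * d u =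
        ℓ * ((1 / ℓ) * ⟪g (w k), u⟫ + V u (z k) + (μ / ℓ) * V u (w k)) +
          (ℓ * d (z k) - ℓ * ⟪Dd (z k), z k⟫ + μ * d (w k) - μ * ⟪Dd (w k), w k⟫) := by
      intro u
      rw [hV, hV, inner_sub_left, inner_sub_left, real_inner_smul_left,
        real_inner_smul_left, inner_sub_right, inner_sub_right]
      field_simp
      ring
    have hmin2 : ∀ v ∈ X, ⟪g (w k) - ℓ • Dd (z k) - μ • Dd (w k), z (k + 1)⟫ +
        (ℓ + μ) * d (z (k + 1)) ≤
        ⟪g (w k) - ℓ • Dd (z k) - μ • Dd (w k), v⟫ + (ℓ + μ) * d v := by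
      intro v hv
      rw [e2, e2]
      have h := mul_le_mul_of_nonneg_left (hzmin k v hv) hℓ.le
      linarith
    have h2 := foc hXconv d Dd hd (hzX (k + 1)) hzs
      (g (w k) - ℓ • Dd (z k) - μ • Dd (w k)) (ℓ + μ) hmin2
    have h3 := hls k
    have h4 := minty_strong hXconv d hdconv Dd hd V hV μ hμ g hmono zs hzs hMinty (hwX k)
    have h5 : 0 ≤ μ * V (z (k + 1)) (w k) := mul_nonneg hμ.le (hVnn _ _)
    rw [← hℓdef] at h3
    have scaled : (ℓ + μ) * V zs (z (k + 1)) ≤ ℓ * (V zs (z k) + δ) := by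
      simp only [hV, inner_sub_left, inner_sub_right, real_inner_smul_left] at h1 h2 h3 h4 h5 ⊢
      linarith
    have hsum : 0 < ℓ + μ := by linarith
    have hq : (1 + μ / ℓ)⁻¹ = ℓ / (ℓ + μ) := by
      rw [one_add_div hℓ.ne', inv_div]
    rw [hq, div_mul_eq_mul_div, le_div_iff₀ hsum]
    nlinarith [scaled]
  have hq' : ∀ j : ℕ, 1 ≤ j → L j * δ / (L j + μ) = (1 + μ / L j)⁻¹ * δ := by
    intro j hj
    have h0 := hL j hj
    rw [one_add_div h0.ne', inv_div]
    ring
  have hqpos : ∀ j : ℕ, 1 ≤ j → 0 < (1 + μ / L j)⁻¹ := by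
    intro j hj
    have := hL j hj
    positivity
  intro k
  induction k with
  | zero =>
      have h := hrec 0
      rw [Finset.Icc_self, Finset.prod_singleton,
        Finset.Icc_eq_empty (by omega : ¬(1:ℕ) ≤ 0), Finset.sum_empty, add_zero,
        hq' 1 le_rfl]
      linarith [h]
  | succ k ih =>
      have h := hrec (k + 1)
      have hmul := mul_le_mul_of_nonneg_left (add_le_add ih (le_refl δ))
        (hqpos (k + 2) (by omega)).le
      refine (h.trans hmul).trans_eq ?_
      rw [Finset.prod_Icc_succ_top (by omega : 1 ≤ k + 2),
        Finset.sum_Icc_succ_top (by omega : 1 ≤ k + 1),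
        Finset.Icc_self, Finset.prod_singleton,
        hq' (k + 1) (by omega), hq' (k + 2) (by omega)]
      have hsum : ∑ j ∈ Icc 1 k, L j * δ / (L j + μ) * ∏ i ∈ Icc (j + 1) (k + 2), (1 + μ / L i)⁻¹
          = (∑ j ∈ Icc 1 k, L j * δ / (L j + μ) * ∏ i ∈ Icc (j + 1) (k + 1), (1 + μ / L i)⁻¹) *
              (1 + μ / L (k + 2))⁻¹ := by
        rw [Finset.sum_mul]
        refine Finset.sum_congr rfl fun j hj => ?_
        have hj' : j ≤ k := (Finset.mem_Icc.mp hj).2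
        rw [Finset.prod_Icc_succ_top (by omega : j + 1 ≤ k + 2)]
        ring
      rw [hsum]
      ring
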